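/- Let λ > 0, let 0 < ε < 1, and let f : ℝ → ℝ be continuously differentiable (C¹) with f(0) = 0, f nondecreasing on [0, ∞), 0 ≤ f(t) ≤ 1 for all t ≥ 0, and deriv f 0 ≥ λ. Then there exists a function g : ℝ → ℝ that is continuous piecewise linear on [0, ∞) with finitely many segments such that for all t ≥ 0, f(t) ≤ g(t) and g(t) ≤ f(t)/(1 − ε). -/

import Mathlib

/-- `g` is continuous piecewise linear on `[0, ∞)` with finitely many segments:
there are breakpoints `0 = τ₀ < τ₁ < ⋯ < τ_N` and coefficients `a_k, b_k` such that
`g t = a_k * t + b_k` on `[τ_k, τ_{k+1}]` for `k < N`, `g t = a_N * t + b_N` on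
`[τ_N, ∞)`, and `g` is continuous on `[0, ∞)`. -/
def ContPiecewiseLinearOnIci (g : ℝ → ℝ) : Prop :=
  ∃ (N : ℕ) (τ a b : Fin (N + 1) → ℝ),
    τ 0 = 0 ∧ StrictMono τ ∧
    (∀ k : Fin N, ∀ t ∈ Set.Icc (τ k.castSucc) (τ k.succ),
      g t = a k.castSucc * t + b k.castSucc) ∧
    (∀ t ∈ Set.Ici (τ (Fin.last N)), g t = a (Fin.last N) * t + b (Fin.last N)) ∧
    ContinuousOn g (Set.Ici (0 : ℝ))




noncomputable def seg (p q : ℕ → ℝ) (n : ℕ) (t : ℝ) : ℝ :=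
  q n + (q (n+1) - q n) / (p (n+1) - p n) * (t - p n)

noncomputable def interp (p q : ℕ → ℝ) : ℕ → ℝ → ℝ
  | 0, _ => q 0
  | (n+1), t => if t ≤ p n then interp p q n t else seg p q n t

lemma interp_node (p q : ℕ → ℝ) (hp : StrictMono p) (n : ℕ) :
    interp p q n (p n) = q n := by
  induction n with
  | zero => rfl
  | succ k ih =>
    have h : ¬ p (k+1) ≤ p k := not_le.2 (hp (Nat.lt_succ_self k))
    have hne : p (k+1) - p k ≠ 0 := sub_ne_zero.2 (ne_of_gt (hp (Nat.lt_succ_self k)))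
    simp only [interp, if_neg h, seg]
    field_simp
    ring

lemma interp_continuous (p q : ℕ → ℝ) (hp : StrictMono p) (n : ℕ) :
    Continuous (interp p q n) := by
  induction n with
  | zero => exact continuous_const
  | succ k ih =>
    have hseg : Continuous (seg p q k) := by
      unfold seg; fun_prop
    have : Continuous fun t => if t ≤ p k then interp p q k t else seg p q k t := by
      apply Continuous.if_le ih hseg continuous_id continuous_const
      intro t ht
      have hne : p (k+1) - p k ≠ 0 := sub_ne_zero.2 (ne_of_gt (hp (Nat.lt_succ_self k)))
      subst ht
      rw [interp_node p q hp k]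
      simp [seg]
    exact this

lemma interp_low (p q : ℕ → ℝ) (n m : ℕ) (hnm : n ≤ m) (t : ℝ) (ht : t ≤ p n)
    (hmono : Monotone p) : interp p q m t = interp p q n t := by
  induction m with
  | zero => have : n = 0 := Nat.le_zero.1 hnm; subst this; rfl
  | succ k ih =>
    rcases Nat.lt_succ_iff_lt_or_eq.1 (Nat.lt_succ_of_le hnm) with h | h
    · have hnk : n ≤ k := Nat.lt_succ_iff.1 h
      have : t ≤ p k := le_trans ht (hmono hnk)
      simp only [interp, if_pos this]
      exact ih hnk
    · subst h; rfl

lemma interp_seg (p q : ℕ → ℝ) (hp : StrictMono p) (k : ℕ) (t : ℝ)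
    (h1 : p k ≤ t) (h2 : t ≤ p (k+1)) :
    interp p q (k+1) t = seg p q k t := by
  by_cases h : t ≤ p k
  · have : t = p k := le_antisymm h h1
    subst this
    simp only [interp, if_pos le_rfl]
    rw [interp_node p q hp k]
    simp [seg]
  · simp only [interp, if_neg h]

lemma seg_bounds (p q : ℕ → ℝ) (hp : StrictMono p) (k : ℕ) (t : ℝ)
    (h1 : p k ≤ t) (h2 : t ≤ p (k+1)) :
    min (q k) (q (k+1)) ≤ seg p q k t ∧ seg p q k t ≤ max (q k) (q (k+1)) := by
  have hlt : p k < p (k+1) := hp (Nat.lt_succ_self k)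
  have hd : 0 < p (k+1) - p k := sub_pos.2 hlt
  set u : ℝ := (t - p k) / (p (k+1) - p k) with hu
  have hu0 : 0 ≤ u := div_nonneg (by linarith) (le_of_lt hd)
  have hu1 : u ≤ 1 := (div_le_one hd).2 (by linarith)
  have hs : seg p q k t = q k + (q (k+1) - q k) * u := by
    simp only [seg, hu]; ring
  rw [hs]
  rcases le_total (q k) (q (k+1)) with h | h
  · constructor
    · rw [min_eq_left h]; nlinarith
    · rw [max_eq_right h]; nlinarith
  · constructor
    · rw [min_eq_right h]; nlinarith
    · rw [max_eq_left h]; nlinarith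

lemma exists_segment (p : ℕ → ℝ) (hmono : Monotone p) (N : ℕ) (t : ℝ)
    (h1 : p 0 ≤ t) (h2 : t ≤ p (N+1)) :
    ∃ k ≤ N, p k ≤ t ∧ t ≤ p (k+1) := by
  induction N with
  | zero => exact ⟨0, le_rfl, h1, h2⟩
  | succ m ih =>
    by_cases h : t ≤ p (m+1)
    · obtain ⟨k, hk, hk1, hk2⟩ := ih h
      exact ⟨k, le_trans hk (Nat.le_succ m), hk1, hk2⟩
    · exact ⟨m+1, le_rfl, le_of_not_ge h, h2⟩

lemma interp_spec (p q : ℕ → ℝ) (hp : StrictMono p) (hp0 : p 0 = 0) (N : ℕ) :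
    ∃ g : ℝ → ℝ, ContPiecewiseLinearOnIci g ∧
      (∀ k ≤ N, ∀ t, p k ≤ t → t ≤ p (k+1) → g t = seg p q k t) ∧
      (∀ t, p (N+1) ≤ t → g t = q (N+1)) := by
  set g : ℝ → ℝ := fun t => interp p q (N+1) (min t (p (N+1))) with hg
  have gseg : ∀ k ≤ N, ∀ t, p k ≤ t → t ≤ p (k+1) → g t = seg p q k t := by
    intro k hk t h1 h2
    have ht : t ≤ p (N+1) := le_trans h2 (hp.monotone (Nat.succ_le_succ hk))
    have : min t (p (N+1)) = t := min_eq_left ht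
    rw [hg]; simp only [this]
    rw [interp_low p q (k+1) (N+1) (Nat.succ_le_succ hk) t h2 hp.monotone]
    exact interp_seg p q hp k t h1 h2
  have glast : ∀ t, p (N+1) ≤ t → g t = q (N+1) := by
    intro t ht
    rw [hg]; simp only [min_eq_right ht]
    exact interp_node p q hp (N+1)
  have gcont : Continuous g :=
    (interp_continuous p q hp (N+1)).comp (continuous_id.min continuous_const)
  refine ⟨g, ⟨N+1, fun j => p j,
    fun j => if (j : ℕ) = N+1 then 0 else (q ((j:ℕ)+1) - q j) / (p ((j:ℕ)+1) - p j),
    fun j => if (j : ℕ) = N+1 then q (N+1)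
      else q j - (q ((j:ℕ)+1) - q j) / (p ((j:ℕ)+1) - p j) * p j,
    ?_, ?_, ?_, ?_, gcont.continuousOn⟩, gseg, glast⟩
  · simpa using hp0
  · intro i j hij
    exact hp hij
  · intro k t ht
    obtain ⟨h1, h2⟩ := ht
    have hkv : ((k.castSucc : Fin (N+2)) : ℕ) = (k : ℕ) := rfl
    have hks : ((k.succ : Fin (N+2)) : ℕ) = (k : ℕ) + 1 := rfl
    have hkN : (k : ℕ) ≠ N + 1 := Nat.ne_of_lt k.isLt
    simp only [hkv, hks] at h1 h2 ⊢
    rw [if_neg hkN, if_neg hkN, gseg k (Nat.lt_succ_iff.1 k.isLt) t h1 h2]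
    simp only [seg]; ring
  · intro t ht
    have hlv : ((Fin.last (N+1) : Fin (N+2)) : ℕ) = N + 1 := rfl
    simp only [hlv] at ht ⊢
    rw [glast t ht]
    simp

set_option maxHeartbeats 2000000 in
theorem piecewise_linear_over_approximation
    (lam : ℝ) (hlam : 0 < lam) (ε : ℝ) (hε0 : 0 < ε) (hε1 : ε < 1)
    (f : ℝ → ℝ) (hC1 : ContDiff ℝ 1 f) (hf0 : f 0 = 0)
    (hmono : MonotoneOn f (Set.Ici (0 : ℝ)))
    (hbdd : ∀ t : ℝ, 0 ≤ t → 0 ≤ f t ∧ f t ≤ 1)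
    (hderiv : lam ≤ deriv f 0) :
    ∃ g : ℝ → ℝ, ContPiecewiseLinearOnIci g ∧
      ∀ t : ℝ, 0 ≤ t → f t ≤ g t ∧ g t ≤ f t / (1 - ε) := by
  have hε' : (0:ℝ) < 1 - ε := by linarith
  set d := deriv f 0 with hd_def
  have hd : 0 < d := lt_of_lt_of_le hlam hderiv
  set s := d * (1 + ε/4) with hs_def
  have hs0 : 0 < s := by nlinarith
  have hs1 : d < s := by nlinarith
  have hs2 : (1 - ε) * s < d := by nlinarith [mul_pos hd hε0, mul_pos (mul_pos hd hε0) hε0]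
  -- derivative/slope control near 0
  have hdiff : HasDerivAt f d 0 :=
    ((hC1.differentiable one_ne_zero) 0).hasDerivAt
  have htend : Filter.Tendsto (slope f 0) (nhdsWithin 0 {(0:ℝ)}ᶜ) (nhds d) :=
    hasDerivAt_iff_tendsto_slope.1 hdiff
  have htend' : Filter.Tendsto (slope f 0) (nhdsWithin 0 (Set.Ioi 0)) (nhds d) :=
    htend.mono_left (nhdsWithin_mono 0 (fun x hx => ne_of_gt hx))
  have hIoo : Set.Ioo ((1-ε)*s) ((d+s)/2) ∈ nhds d :=
    Ioo_mem_nhds hs2 (by linarith)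
  have hev : {t : ℝ | slope f 0 t ∈ Set.Ioo ((1-ε)*s) ((d+s)/2)} ∈
      nhdsWithin (0:ℝ) (Set.Ioi 0) := htend' hIoo
  obtain ⟨r', hr', hsub⟩ := mem_nhdsGT_iff_exists_Ioc_subset.1 hev
  set r := min r' (1/2) with hr_def
  have hr : 0 < r := lt_min hr' (by norm_num)
  have hr2 : r ≤ 1/2 := min_le_right _ _
  have hslope : ∀ t, 0 < t → t ≤ r → (1-ε)*s*t ≤ f t ∧ f t ≤ (d+s)/2*t := by
    intro t ht htr
    have hmem : t ∈ Set.Ioc (0:ℝ) r' := ⟨ht, le_trans htr (min_le_left _ _)⟩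
    have hmem' := hsub hmem
    simp only [Set.mem_setOf_eq] at hmem'
    have hst : slope f 0 t = f t / t := by
      rw [slope_def_field]; simp [hf0]
    rw [hst] at hmem'
    obtain ⟨h1, h2⟩ := hmem'
    constructor
    · have := (lt_div_iff₀ ht).1 h1; linarith
    · have := (div_lt_iff₀ ht).1 h2; linarith
  have hfr_lo : (1-ε)*s*r ≤ f r := (hslope r hr le_rfl).1
  have hfr_hi : f r ≤ (d+s)/2*r := (hslope r hr le_rfl).2
  have hm : 0 < f r := lt_of_lt_of_le (by positivity) hfr_lo
  -- supremum
  set L := sSup (f '' Set.Ici 0) with hL_def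
  have hbd : BddAbove (f '' Set.Ici 0) := by
    refine ⟨1, ?_⟩
    rintro y ⟨t, ht, rfl⟩
    exact (hbdd t ht).2
  have hne : (f '' Set.Ici 0).Nonempty := ⟨f 0, 0, Set.self_mem_Ici, rfl⟩
  have hLub : ∀ t, 0 ≤ t → f t ≤ L := fun t ht => le_csSup hbd ⟨t, ht, rfl⟩
  have hL0 : 0 < L := lt_of_lt_of_le hm (hLub r hr.le)
  have hlt : (1-ε)*L < L := by linarith only [mul_pos hε0 hL0]
  obtain ⟨y, ⟨T₀, hT₀0, rfl⟩, hy⟩ := exists_lt_of_lt_csSup hne hlt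
  set T := T₀ + 1 with hT_def
  have hT₀0' : (0:ℝ) ≤ T₀ := hT₀0
  have hrT : r < T := by linarith
  -- uniform continuity
  set η := min ((s-d)/2*r) (ε * f r/(1-ε)) with hη_def
  have hη : 0 < η := by
    apply lt_min
    · have hsd : (0:ℝ) < (s - d)/2 := by linarith
      exact mul_pos hsd hr
    · exact div_pos (mul_pos hε0 hm) hε'
  have hη1 : η ≤ (s-d)/2*r := min_le_left _ _
  have hη2 : η ≤ ε * f r/(1-ε) := min_le_right _ _
  have hfc : Continuous f := hC1.continuous
  have hUC : UniformContinuousOn f (Set.Icc 0 T) :=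
    isCompact_Icc.uniformContinuousOn_of_continuous hfc.continuousOn
  obtain ⟨δ, hδ, hδu⟩ := Metric.uniformContinuousOn_iff.1 hUC η hη
  clear_value d s r L T η
  -- mesh
  set μ := min 1 (δ/2) with hμ_def
  have hμ : 0 < μ := lt_min one_pos (by positivity)
  obtain ⟨n₀, hn₀⟩ := exists_nat_gt ((T - r)/μ)
  set n := n₀ + 2 with hn_def
  have hn2 : 2 ≤ n := Nat.le_add_left 2 n₀
  have hnpos : (0:ℝ) < n := by positivity
  have hn : (T - r)/μ < n := by
    refine lt_of_lt_of_le hn₀ ?_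
    exact_mod_cast Nat.le_add_right n₀ 2
  set h := (T - r)/n with hh_def
  have hh : 0 < h := div_pos (by linarith) hnpos
  have hhμ : h < μ := by
    rw [hh_def, div_lt_iff₀ hnpos]
    have := (div_lt_iff₀ hμ).1 hn
    linarith [this]
  have hh1 : h ≤ 1 := le_trans hhμ.le (min_le_left _ _)
  have hh2 : 2*h < δ := by
    have := lt_of_lt_of_le hhμ (min_le_right _ _)
    linarith
  clear_value μ n h
  -- breakpoints and node values
  set p : ℕ → ℝ := fun j => if j = 0 then 0 else r + ((j - 1 : ℕ) : ℝ) * h with hp_def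
  have hp0 : p 0 = 0 := by simp [hp_def]
  have hpsucc : ∀ k : ℕ, p (k+1) = r + (k:ℝ)*h := by
    intro k; simp [hp_def]
  have hpmono : StrictMono p := by
    apply strictMono_nat_of_lt_succ
    intro j
    cases j with
    | zero =>
      rw [hp0, hpsucc]
      push_cast
      linarith only [hr, mul_nonneg (le_refl (0:ℝ)) hh.le]
    | succ k =>
      rw [hpsucc, hpsucc]
      push_cast
      linarith only [hh]
  have hp1 : p 1 = r := by rw [hpsucc]; push_cast; ring
  have hpT : p (n+1) = T := by
    have h0 : (n:ℝ) ≠ 0 := ne_of_gt hnpos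
    rw [hpsucc, hh_def]
    field_simp
    ring
  have hp_nonneg : ∀ j, 0 ≤ p j := by
    intro j
    cases j with
    | zero => rw [hp0]
    | succ k => rw [hpsucc]; positivity
  have hp_leT : ∀ j, j ≤ n+1 → p j ≤ T := by
    intro j hj
    rw [← hpT]; exact hpmono.monotone hj
  have hp_r : ∀ j, 1 ≤ j → r ≤ p j := by
    intro j hj
    rw [← hp1]; exact hpmono.monotone hj
  set q : ℕ → ℝ := fun j => if j = 0 then 0 else if j = 1 then s*r
      else if n+1 ≤ j then L else f (r + (j:ℝ)*h) with hq_def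
  have hq1 : q 1 = s*r := by simp [hq_def]
  have hqmid : ∀ j, 2 ≤ j → j ≤ n → q j = f (p (j+1)) := by
    intro j h1 h2
    rw [hpsucc]
    simp only [hq_def]
    rw [if_neg (by omega), if_neg (by omega), if_neg (by omega)]
  have hqlast : q (n+1) = L := by
    simp only [hq_def]
    rw [if_neg (by omega), if_neg (by omega), if_pos (by omega)]
  clear_value p q
  -- monotonicity helper
  have hfm : ∀ u v : ℝ, 0 ≤ u → u ≤ v → f u ≤ f v := by
    intro u v hu huv
    exact hmono hu (le_trans hu huv) huv
  -- mesh estimate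
  have hmesh : ∀ j k : ℕ, 1 ≤ j → j ≤ k → k ≤ j + 2 → k ≤ n+1 →
      f (p k) - f (p j) ≤ η := by
    intro j k hj hjk hk2 hkn
    obtain ⟨a, rfl⟩ := Nat.exists_eq_succ_of_ne_zero (show j ≠ 0 by omega)
    obtain ⟨b, rfl⟩ := Nat.exists_eq_succ_of_ne_zero (show k ≠ 0 by omega)
    have hab : a ≤ b := by omega
    have hab2 : b ≤ a + 2 := by omega
    have hcast : (b:ℝ) ≤ (a:ℝ) + 2 := by exact_mod_cast hab2
    have hcast' : (a:ℝ) ≤ (b:ℝ) := by exact_mod_cast hab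
    have hdist : dist (p (b+1)) (p (a+1)) < δ := by
      rw [Real.dist_eq, hpsucc, hpsucc, abs_of_nonneg]
      · have h1 : ((b:ℝ) - a) * h ≤ 2 * h :=
          mul_le_mul_of_nonneg_right (by linarith only [hcast]) hh.le
        have h2 : ((b:ℝ) - a) * h = (b:ℝ)*h - (a:ℝ)*h := by ring
        linarith only [h1, h2, hh2]
      · have h1 : (a:ℝ) * h ≤ (b:ℝ) * h :=
          mul_le_mul_of_nonneg_right hcast' hh.le
        linarith only [h1]
    have hmem1 : p (b+1) ∈ Set.Icc (0:ℝ) T := ⟨hp_nonneg _, hp_leT _ (by omega)⟩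
    have hmem2 : p (a+1) ∈ Set.Icc (0:ℝ) T := ⟨hp_nonneg _, hp_leT _ (by omega)⟩
    have := hδu _ hmem1 _ hmem2 hdist
    rw [Real.dist_eq] at this
    calc f (p (b+1)) - f (p (a+1)) ≤ |f (p (b+1)) - f (p (a+1))| := le_abs_self _
    _ ≤ η := this.le
  -- key division inequality
  have hkey : ∀ a b : ℝ, f r ≤ a → b ≤ a + η → b ≤ a / (1-ε) := by
    intro a b ha hb
    rw [le_div_iff₀ hε']
    have h2 : ε * f r / (1-ε) * (1-ε) = ε * f r := by field_simp
    have h3 : η * (1-ε) ≤ ε * f r := by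
      have := mul_le_mul_of_nonneg_right hη2 hε'.le
      rwa [h2] at this
    linarith only [mul_le_mul_of_nonneg_right hb hε'.le,
      mul_le_mul_of_nonneg_left ha hε0.le, h3]
  -- the four claims
  have claimB : ∀ j, 1 ≤ j → j ≤ n+1 → f (p j) ≤ q j := by
    intro j h1 h2
    by_cases hj1 : j = 1
    · subst hj1
      rw [hq1, hp1]
      have h1 : (d+s)/2 * r ≤ s * r :=
        mul_le_mul_of_nonneg_right (by linarith only [hs1]) hr.le
      linarith only [hfr_hi, h1]
    · by_cases hjn : j = n+1
      · subst hjn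
        rw [hqlast]
        exact hLub _ (hp_nonneg _)
      · rw [hqmid j (by omega) (by omega)]
        exact hfm _ _ (hp_nonneg _) (hpmono.monotone (Nat.le_succ j))
  have claimA : ∀ k, 1 ≤ k → k ≤ n → f (p (k+1)) ≤ q k := by
    intro k h1 h2
    by_cases hk1 : k = 1
    · subst hk1
      rw [hq1]
      have hms := hmesh 1 2 le_rfl (by omega) (by omega) (by omega)
      rw [hp1] at hms
      have h1 : (d+s)/2 * r + (s-d)/2 * r = s * r := by ring
      linarith only [hms, hη1, hfr_hi, h1]
    · rw [hqmid k (by omega) h2]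
  have claimC : ∀ k, 1 ≤ k → k ≤ n → q k ≤ f (p k) / (1-ε) := by
    intro k h1 h2
    by_cases hk1 : k = 1
    · subst hk1
      rw [hq1, hp1, le_div_iff₀ hε']
      linarith only [hfr_lo]
    · rw [hqmid k (by omega) h2]
      apply hkey _ _ (by rw [← hp1]; exact hfm _ _ (by rw [hp1]; exact hr.le) (hpmono.monotone (by omega)))
      have := hmesh k (k+1) h1 (Nat.le_succ k) (by omega) (by omega)
      linarith
  have claimD : ∀ k, 1 ≤ k → k ≤ n → q (k+1) ≤ f (p k) / (1-ε) := by
    intro k h1 h2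
    by_cases hkn : k = n
    · rw [hkn, hqlast, le_div_iff₀ hε']
      have hpn : T₀ ≤ p n := by
        have hn1 : 1 ≤ n := by omega
        simp only [hp_def]
        rw [if_neg (show ¬ n = 0 by omega)]
        have : ((n - 1 : ℕ) : ℝ) = (n:ℝ) - 1 := by
          rw [Nat.cast_sub hn1]; norm_num
        rw [this]
        have hT : T = r + (n:ℝ)*h := by rw [← hpT, hpsucc]
        have h1 : r + ((n:ℝ) - 1) * h = (r + (n:ℝ)*h) - h := by ring
        linarith only [hT, hT_def, hh1, h1]
      have h2 : f T₀ ≤ f (p n) := hfm _ _ hT₀0' hpn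
      linarith only [h2, hy]
    · rw [hqmid (k+1) (by omega) (by omega)]
      apply hkey _ _ (by rw [← hp1]; exact hfm _ _ (by rw [hp1]; exact hr.le) (hpmono.monotone (by omega)))
      have := hmesh k (k+2) h1 (by omega) (by omega) (by omega)
      linarith
  -- assemble
  obtain ⟨g, hgPL, hgseg, hglast⟩ := interp_spec p q hpmono hp0 n
  refine ⟨g, hgPL, ?_⟩
  intro t ht0
  by_cases hT : p (n+1) ≤ t
  · rw [hglast t hT, hqlast]
    constructor
    · exact hLub t ht0
    · rw [le_div_iff₀ hε']
      have hTt : T₀ ≤ t := by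
        rw [hpT] at hT
        linarith only [hT, hT_def]
      have h2 : f T₀ ≤ f t := hfm _ _ hT₀0' hTt
      linarith only [h2, hy]
  · push_neg at hT
    obtain ⟨k, hk, hk1, hk2⟩ := exists_segment p hpmono.monotone n t
      (by rw [hp0]; exact ht0) hT.le
    rw [hgseg k hk t hk1 hk2]
    by_cases hk0 : k = 0
    · subst hk0
      have hseg0 : seg p q 0 t = s * t := by
        simp only [seg, hq1, hp0, hp1]
        rw [show q 0 = 0 by simp [hq_def]]
        simp only [sub_zero, zero_add]
        rw [mul_comm s r, mul_div_cancel_left₀ _ hr.ne']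
      rw [hseg0]
      rcases eq_or_lt_of_le ht0 with heq | hpos
      · rw [← heq, hf0]
        norm_num
      · have hts : t ≤ r := by rw [← hp1]; exact hk2
        obtain ⟨hl, hu⟩ := hslope t hpos hts
        constructor
        · have h1 : (d+s)/2 * t ≤ s * t :=
            mul_le_mul_of_nonneg_right (by linarith only [hs1]) hpos.le
          linarith only [hu, h1]
        · rw [le_div_iff₀ hε']
          linarith only [hl]
    · have hk1' : 1 ≤ k := by omega
      obtain ⟨hlo, hhi⟩ := seg_bounds p q hpmono k t hk1 hk2
      constructor
      · refine le_trans ?_ hlo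
        refine le_trans (hfm _ _ ht0 hk2) ?_
        exact le_min (claimA k hk1' hk) (claimB (k+1) (by omega) (by omega))
      · refine le_trans hhi ?_
        refine le_trans (max_le (claimC k hk1' hk) (claimD k hk1' hk)) ?_
        have : f (p k) ≤ f t := hfm _ _ (hp_nonneg k) hk1
        exact (div_le_div_iff_of_pos_right hε').2 this
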